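/- Chapman–Kolmogorov relation for the one-dimensional pure-death process: for θ > 0 with rates λ_h = h(θ + h − 1)/2, define p_{m,n}(s) = e^{−λ_m s} if n = m, and p_{m,n}(s) = C_{m,n}(s) for 0 ≤ n < m where C_{m,n}(s) = (∏_{h=n+1}^{m} λ_h)(−1)^{m−n} Σ_{k=n}^{m} e^{−λ_k s}/∏_{n ≤ h ≤ m, h ≠ k}(λ_k − λ_h). Then for all s, u ≥ 0 and 0 ≤ n ≤ m: p_{m,n}(s + u) = Σ_{j=n}^{m} p_{m,j}(s) p_{j,n}(u). -/

import Mathlib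

/-- The death process rates `λ_h = h(θ + h - 1)/2`. -/
noncomputable def deathRate (θ : ℝ) (h : ℕ) : ℝ := h * (θ + h - 1) / 2

/-- The partial-fraction expression `C_{m,n}(s)`. -/
noncomputable def Cdeath (θ : ℝ) (m n : ℕ) (s : ℝ) : ℝ :=
  (∏ h ∈ Finset.Icc (n + 1) m, deathRate θ h) * (-1 : ℝ) ^ (m - n) *
    ∑ k ∈ Finset.Icc n m, Real.exp (-(deathRate θ k) * s) /
      ∏ h ∈ (Finset.Icc n m).erase k, (deathRate θ k - deathRate θ h)

/-- Transition probabilities of the one-dimensional pure-death process. -/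
noncomputable def pDeath (θ : ℝ) (m n : ℕ) (s : ℝ) : ℝ :=
  if n = m then Real.exp (-(deathRate θ m) * s)
  else if n < m then Cdeath θ m n s
  else 0


open Finset

lemma deathRate_lt (θ : ℝ) (hθ : 0 < θ) {i j : ℕ} (hij : i < j) :
    deathRate θ i < deathRate θ j := by
  unfold deathRate
  have h1 : (i:ℝ) + 1 ≤ j := by exact_mod_cast hij
  have h0 : (0:ℝ) ≤ i := Nat.cast_nonneg i
  nlinarith

lemma deathRate_ne (θ : ℝ) (hθ : 0 < θ) {i j : ℕ} (hij : i ≠ j) :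
    deathRate θ i ≠ deathRate θ j := by
  rcases hij.lt_or_gt with h | h
  · exact ne_of_lt (deathRate_lt θ hθ h)
  · exact (ne_of_lt (deathRate_lt θ hθ h)).symm

lemma prod_sub_ne_zero (θ : ℝ) (hθ : 0 < θ) (r : ℕ) {t : Finset ℕ} (hr : r ∉ t) :
    ∏ h ∈ t, (deathRate θ r - deathRate θ h) ≠ 0 := by
  refine Finset.prod_ne_zero_iff.mpr fun h hh => sub_ne_zero.mpr ?_
  exact deathRate_ne θ hθ (fun e => hr (e ▸ hh))

lemma prod_erase_split (f : ℕ → ℝ) {p q r : ℕ} (h1 : p ≤ r) (h2 : r ≤ q) :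
    ∏ h ∈ (Finset.Icc p q).erase r, f h =
      (∏ h ∈ Finset.Ico p r, f h) * ∏ h ∈ Finset.Ioc r q, f h := by
  have hd : Disjoint (Finset.Ico p r) (Finset.Ioc r q) := by
    rw [Finset.disjoint_left]
    intro x hx hx'
    simp only [Finset.mem_Ico, Finset.mem_Ioc] at hx hx'
    omega
  rw [← Finset.prod_union hd]
  apply Finset.prod_congr _ fun _ _ => rfl
  ext x
  simp only [Finset.mem_erase, Finset.mem_Icc, Finset.mem_union, Finset.mem_Ico, Finset.mem_Ioc]
  omega

lemma sum_Icc_telescope (g : ℕ → ℝ) {l k : ℕ} (h : l ≤ k) :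
    ∑ j ∈ Finset.Icc l k, (g (j+1) - g j) = g (k+1) - g l := by
  induction k, h using Nat.le_induction with
  | base => simp
  | succ k hk ih =>
      rw [Finset.sum_Icc_succ_top (by omega), ih]
      ring

noncomputable def Ffun (θ : ℝ) (l k j : ℕ) : ℝ :=
  (∏ h ∈ Finset.Ico j k, (deathRate θ k - deathRate θ h))⁻¹ *
  (∏ h ∈ Finset.Ioc l j, (deathRate θ l - deathRate θ h))⁻¹

noncomputable def Hfun (θ : ℝ) (l k j : ℕ) : ℝ :=
  if j = l ∨ k < j then 0 else
  (∏ h ∈ Finset.Ico j k, (deathRate θ k - deathRate θ h))⁻¹ *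
  (∏ h ∈ Finset.Ico (l+1) j, (deathRate θ l - deathRate θ h))⁻¹

lemma Hfun_step (θ : ℝ) (hθ : 0 < θ) {l k j : ℕ} (hlk : l < k) (h1 : l ≤ j) (h2 : j ≤ k) :
    (deathRate θ k - deathRate θ l) * Ffun θ l k j = Hfun θ l k (j+1) - Hfun θ l k j := by
  have hkl : deathRate θ k - deathRate θ l ≠ 0 :=
    sub_ne_zero.mpr (deathRate_ne θ hθ (by omega))
  unfold Ffun Hfun
  rcases eq_or_lt_of_le h1 with rfl | hlj
  · -- j = l
    rw [if_pos (Or.inl rfl), if_neg (by omega)]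
    have hA : ∏ h ∈ Finset.Ico (l+1) k, (deathRate θ k - deathRate θ h) ≠ 0 :=
      prod_sub_ne_zero θ hθ k (by simp)
    rw [Finset.prod_eq_prod_Ico_succ_bot hlk, Finset.Ioc_self, Finset.Ico_self,
      Finset.prod_empty]
    field_simp
    simp
  rcases eq_or_lt_of_le h2 with rfl | hjk
  · -- j = k (k is replaced by j)
    rw [if_pos (Or.inr (by omega)), if_neg (by omega), Finset.Ico_self, Finset.prod_empty]
    have hB : ∏ h ∈ Finset.Ico (l+1) j, (deathRate θ l - deathRate θ h) ≠ 0 :=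
      prod_sub_ne_zero θ hθ l (by simp)
    have hYk : deathRate θ l - deathRate θ j ≠ 0 :=
      sub_ne_zero.mpr (deathRate_ne θ hθ (by omega))
    rw [← Finset.Icc_add_one_left_eq_Ioc, ← Finset.Ico_add_one_right_eq_Icc, Finset.prod_Ico_succ_top (by omega)]
    field_simp
    ring
  · -- l < j < k
    rw [if_neg (by omega), if_neg (by omega)]
    have hA : ∏ h ∈ Finset.Ico (j+1) k, (deathRate θ k - deathRate θ h) ≠ 0 :=
      prod_sub_ne_zero θ hθ k (by simp)
    have hB : ∏ h ∈ Finset.Ico (l+1) j, (deathRate θ l - deathRate θ h) ≠ 0 :=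
      prod_sub_ne_zero θ hθ l (by simp)
    have hXj : deathRate θ k - deathRate θ j ≠ 0 :=
      sub_ne_zero.mpr (deathRate_ne θ hθ (by omega))
    have hYj : deathRate θ l - deathRate θ j ≠ 0 :=
      sub_ne_zero.mpr (deathRate_ne θ hθ (by omega))
    rw [Finset.prod_eq_prod_Ico_succ_bot hjk, ← Finset.Icc_add_one_left_eq_Ioc, ← Finset.Ico_add_one_right_eq_Icc,
      Finset.prod_Ico_succ_top (by omega)]
    field_simp
    ring

lemma key_sum (θ : ℝ) (hθ : 0 < θ) {n l k m : ℕ} (hnl : n ≤ l) (hlk : l ≤ k) (hkm : k ≤ m) :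
    ∑ j ∈ Finset.Icc l k,
      ((∏ h ∈ (Finset.Icc j m).erase k, (deathRate θ k - deathRate θ h))⁻¹ *
       (∏ h ∈ (Finset.Icc n j).erase l, (deathRate θ l - deathRate θ h))⁻¹) =
      if k = l then (∏ h ∈ (Finset.Icc n m).erase k, (deathRate θ k - deathRate θ h))⁻¹
      else 0 := by
  rcases eq_or_lt_of_le hlk with rfl | hlt
  · -- k = l
    rw [if_pos rfl, Finset.Icc_self, Finset.sum_singleton,
      prod_erase_split _ le_rfl hkm, prod_erase_split _ hnl le_rfl,
      prod_erase_split _ hnl hkm]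
    simp [Finset.Ico_self, Finset.Ioc_self, mul_inv, mul_comm]
  · -- l < k
    rw [if_neg (by omega)]
    have hkl : deathRate θ k - deathRate θ l ≠ 0 :=
      sub_ne_zero.mpr (deathRate_ne θ hθ (by omega))
    have hterm : ∀ j ∈ Finset.Icc l k,
        (∏ h ∈ (Finset.Icc j m).erase k, (deathRate θ k - deathRate θ h))⁻¹ *
        (∏ h ∈ (Finset.Icc n j).erase l, (deathRate θ l - deathRate θ h))⁻¹ =
        (∏ h ∈ Finset.Ioc k m, (deathRate θ k - deathRate θ h))⁻¹ *
        (∏ h ∈ Finset.Ico n l, (deathRate θ l - deathRate θ h))⁻¹ * Ffun θ l k j := by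
      intro j hj
      simp only [Finset.mem_Icc] at hj
      rw [prod_erase_split _ hj.2 hkm, prod_erase_split _ hnl hj.1]
      unfold Ffun
      rw [mul_inv, mul_inv]
      ring
    rw [Finset.sum_congr rfl hterm, ← Finset.mul_sum]
    have hF : ∑ j ∈ Finset.Icc l k, Ffun θ l k j = 0 := by
      have h1 : (deathRate θ k - deathRate θ l) * ∑ j ∈ Finset.Icc l k, Ffun θ l k j = 0 := by
        rw [Finset.mul_sum,
          Finset.sum_congr rfl fun j hj => by
            simp only [Finset.mem_Icc] at hj
            exact Hfun_step θ hθ hlt hj.1 hj.2,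
          sum_Icc_telescope _ hlt.le]
        have e1 : Hfun θ l k (k+1) = 0 := by unfold Hfun; rw [if_pos (Or.inr (by omega))]
        have e2 : Hfun θ l k l = 0 := by unfold Hfun; rw [if_pos (Or.inl rfl)]
        rw [e1, e2, sub_zero]
      exact (mul_eq_zero.mp h1).resolve_left hkl
    rw [hF, mul_zero]

lemma pDeath_eq_Cdeath (θ : ℝ) {n m : ℕ} (hnm : n ≤ m) (s : ℝ) :
    pDeath θ m n s = Cdeath θ m n s := by
  unfold pDeath
  rcases eq_or_lt_of_le hnm with rfl | h
  · rw [if_pos rfl]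
    unfold Cdeath
    rw [Finset.Icc_self, Finset.sum_singleton, Finset.erase_singleton, Finset.prod_empty,
      Finset.Icc_eq_empty (by omega), Finset.prod_empty]
    norm_num
  · rw [if_neg (by omega), if_pos h]

lemma Cdeath_mul (θ : ℝ) {n j m : ℕ} (hnj : n ≤ j) (hjm : j ≤ m) (s u : ℝ) :
    Cdeath θ m j s * Cdeath θ j n u =
    ((∏ h ∈ Finset.Icc (n+1) m, deathRate θ h) * (-1:ℝ)^(m-n)) *
      ∑ k ∈ Finset.Icc j m, ∑ l ∈ Finset.Icc n j,
        Real.exp (-(deathRate θ k) * s) * Real.exp (-(deathRate θ l) * u) *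
        ((∏ h ∈ (Finset.Icc j m).erase k, (deathRate θ k - deathRate θ h))⁻¹ *
         (∏ h ∈ (Finset.Icc n j).erase l, (deathRate θ l - deathRate θ h))⁻¹) := by
  have hP : (∏ h ∈ Finset.Icc (j+1) m, deathRate θ h) *
      (∏ h ∈ Finset.Icc (n+1) j, deathRate θ h) = ∏ h ∈ Finset.Icc (n+1) m, deathRate θ h := by
    rw [Finset.Icc_add_one_left_eq_Ioc, Finset.Icc_add_one_left_eq_Ioc, Finset.Icc_add_one_left_eq_Ioc, mul_comm]
    exact Finset.prod_Ioc_consecutive _ hnj hjm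
  have hsgn : (-1:ℝ)^(m-j) * (-1:ℝ)^(j-n) = (-1:ℝ)^(m-n) := by
    rw [← pow_add]; congr 1; omega
  unfold Cdeath
  calc ((∏ h ∈ Finset.Icc (j+1) m, deathRate θ h) * (-1:ℝ)^(m-j) *
          ∑ k ∈ Finset.Icc j m, Real.exp (-(deathRate θ k) * s) /
            ∏ h ∈ (Finset.Icc j m).erase k, (deathRate θ k - deathRate θ h)) *
        ((∏ h ∈ Finset.Icc (n+1) j, deathRate θ h) * (-1:ℝ)^(j-n) *
          ∑ l ∈ Finset.Icc n j, Real.exp (-(deathRate θ l) * u) /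
            ∏ h ∈ (Finset.Icc n j).erase l, (deathRate θ l - deathRate θ h))
      = (((∏ h ∈ Finset.Icc (j+1) m, deathRate θ h) * (∏ h ∈ Finset.Icc (n+1) j, deathRate θ h))
          * ((-1:ℝ)^(m-j) * (-1:ℝ)^(j-n))) *
        ((∑ k ∈ Finset.Icc j m, Real.exp (-(deathRate θ k) * s) /
            ∏ h ∈ (Finset.Icc j m).erase k, (deathRate θ k - deathRate θ h)) *
         (∑ l ∈ Finset.Icc n j, Real.exp (-(deathRate θ l) * u) /
            ∏ h ∈ (Finset.Icc n j).erase l, (deathRate θ l - deathRate θ h))) := by ring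
    _ = ((∏ h ∈ Finset.Icc (n+1) m, deathRate θ h) * (-1:ℝ)^(m-n)) *
        ∑ k ∈ Finset.Icc j m, ∑ l ∈ Finset.Icc n j,
          (Real.exp (-(deathRate θ k) * s) /
            ∏ h ∈ (Finset.Icc j m).erase k, (deathRate θ k - deathRate θ h)) *
          (Real.exp (-(deathRate θ l) * u) /
            ∏ h ∈ (Finset.Icc n j).erase l, (deathRate θ l - deathRate θ h)) := by
        rw [hP, hsgn, Finset.sum_mul_sum]
    _ = _ := by
        congr 1
        refine Finset.sum_congr rfl fun k _ => Finset.sum_congr rfl fun l _ => ?_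
        rw [div_eq_mul_inv, div_eq_mul_inv]
        ring

lemma triple_swap (n m : ℕ) (T : ℕ → ℕ → ℕ → ℝ) :
    (∑ j ∈ Finset.Icc n m, ∑ k ∈ Finset.Icc j m, ∑ l ∈ Finset.Icc n j, T j k l)
      = ∑ k ∈ Finset.Icc n m, ∑ l ∈ Finset.Icc n k, ∑ j ∈ Finset.Icc l k, T j k l := by
  simp_rw [← Finset.Ico_add_one_right_eq_Icc]
  rw [Finset.sum_Ico_Ico_comm]
  refine Finset.sum_congr rfl fun k _ => ?_
  exact (Finset.sum_Ico_Ico_comm n (k+1) fun l j => T j k l).symm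

theorem pDeath_chapman_kolmogorov (θ : ℝ) (hθ : 0 < θ) (s u : ℝ)
    (hs : 0 ≤ s) (hu : 0 ≤ u) (n m : ℕ) (hnm : n ≤ m) :
    pDeath θ m n (s + u) = ∑ j ∈ Finset.Icc n m, pDeath θ m j s * pDeath θ j n u := by
  rw [pDeath_eq_Cdeath θ hnm]
  rw [Finset.sum_congr rfl (fun j hj => by
    simp only [Finset.mem_Icc] at hj
    rw [pDeath_eq_Cdeath θ hj.2, pDeath_eq_Cdeath θ hj.1])]
  rw [Finset.sum_congr rfl (fun j hj => by
    simp only [Finset.mem_Icc] at hj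
    exact Cdeath_mul θ hj.1 hj.2 s u)]
  rw [← Finset.mul_sum]
  unfold Cdeath
  congr 1
  rw [triple_swap n m (fun j k l =>
    Real.exp (-(deathRate θ k) * s) * Real.exp (-(deathRate θ l) * u) *
        ((∏ h ∈ (Finset.Icc j m).erase k, (deathRate θ k - deathRate θ h))⁻¹ *
         (∏ h ∈ (Finset.Icc n j).erase l, (deathRate θ l - deathRate θ h))⁻¹))]
  refine (Finset.sum_congr rfl fun k hk => ?_).symm
  simp only [Finset.mem_Icc] at hk
  have hl : ∀ l ∈ Finset.Icc n k,
      (∑ j ∈ Finset.Icc l k,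
        Real.exp (-(deathRate θ k) * s) * Real.exp (-(deathRate θ l) * u) *
          ((∏ h ∈ (Finset.Icc j m).erase k, (deathRate θ k - deathRate θ h))⁻¹ *
           (∏ h ∈ (Finset.Icc n j).erase l, (deathRate θ l - deathRate θ h))⁻¹)) =
      if k = l then Real.exp (-(deathRate θ k) * s) * Real.exp (-(deathRate θ l) * u) *
        (∏ h ∈ (Finset.Icc n m).erase k, (deathRate θ k - deathRate θ h))⁻¹ else 0 := by
    intro l hlmem
    simp only [Finset.mem_Icc] at hlmem
    rw [← Finset.mul_sum, key_sum θ hθ hlmem.1 hlmem.2 hk.2, mul_ite, mul_zero]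
  rw [Finset.sum_congr rfl hl, Finset.sum_ite_eq,
    if_pos (Finset.mem_Icc.mpr ⟨hk.1, le_rfl⟩), ← Real.exp_add,
    show -(deathRate θ k) * s + -(deathRate θ k) * u = -(deathRate θ k) * (s + u) by ring,
    div_eq_mul_inv]
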